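/- The 2-Sylow subgroup P_n of S_n is isomorphic to the direct product of the groups H_{k} = P_{2^k} over all k in Bin(n), where Bin(n) is the set of exponents in the binary expansion of n. -/

import Mathlib

open Equiv Finset

private lemma testBit_iff_mem_bitIndices {n i : ℕ} :
    n.testBit i ↔ i ∈ n.bitIndices := by
  induction n using Nat.binaryRec generalizing i with
  | zero => simp
  | bit b m ih =>
    cases i with
    | zero =>
      rw [Nat.testBit_bit_zero]
      cases b
      · rw [Nat.bitIndices_bit_false]; simp
      · rw [Nat.bitIndices_bit_true]; simp
    | succ i =>
      rw [Nat.testBit_bit_succ]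
      cases b
      · rw [Nat.bitIndices_bit_false]; simp [- Nat.mem_bitIndices, ih]
      · rw [Nat.bitIndices_bit_true]; simp [- Nat.mem_bitIndices, ih]

private lemma digits_sum_eq_length (n : ℕ) :
    (Nat.digits 2 n).sum = n.bitIndices.length := by
  induction n using Nat.binaryRec with
  | zero => simp
  | bit b m ih =>
    cases b with
    | false =>
      rw [Nat.bit_false]
      rcases Nat.eq_zero_or_pos m with rfl | hm
      · simp
      · rw [Nat.digits_def' (b := 2) (by norm_num) (show 0 < 2 * m by omega)]
        have e1 : 2 * m % 2 = 0 := by omega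
        have e2 : 2 * m / 2 = m := by omega
        rw [e1, e2, Nat.bitIndices_two_mul]
        simp [ih]
    | true =>
      rw [Nat.bit_true]
      rw [Nat.digits_def' (b := 2) (by norm_num) (show 0 < 2 * m + 1 by omega)]
      have e1 : (2 * m + 1) % 2 = 1 := by omega
      have e2 : (2 * m + 1) / 2 = m := by omega
      rw [e1, e2, Nat.bitIndices_two_mul_add_one]
      simp [ih, Nat.add_comm]

private lemma factorization_factorial_two (m : ℕ) :
    (Nat.factorial m).factorization 2 = m - (Nat.digits 2 m).sum := by
  have h := Nat.Prime.sub_one_mul_multiplicity_factorial (n := m) Nat.prime_two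
  rwa [Nat.multiplicity_eq_factorization Nat.prime_two (Nat.factorial_ne_zero m),
    show (2 - 1 : ℕ) = 1 from rfl, one_mul] at h

/-- `MulEquiv` version of `Equiv.permCongr`. -/
private def permCongrMulEquiv {α β : Type*} (e : α ≃ β) : Perm α ≃* Perm β :=
  { e.permCongr with
    map_mul' := fun p q => by
      ext x
      simp [Equiv.permCongr_apply] }

/-- The 2-Sylow subgroup `P_n` of `S_n` is isomorphic to the direct product of the
groups `H_k = P_{2^k}` over all `k ∈ Bin(n)`, the set of exponents in the binary
expansion of `n` (i.e. those `k` with `n.testBit k = true`). -/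
theorem sylow_two_symm_iso_prod_of_binary (n : ℕ)
    (P : Sylow 2 (Equiv.Perm (Fin n)))
    (H : ∀ k : ℕ, Sylow 2 (Equiv.Perm (Fin (2 ^ k)))) :
    Nonempty (P ≃* (∀ k : {k : ℕ // n.testBit k}, H k.1)) := by
  classical
  haveI : Fact (Nat.Prime 2) := ⟨Nat.prime_two⟩
  set S : Finset ℕ := n.bitIndices.toFinset with hS
  have hmem : ∀ i, i ∈ S ↔ n.testBit i = true := fun i => by
    simp [hS, List.mem_toFinset, - Nat.mem_bitIndices, testBit_iff_mem_bitIndices]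
  haveI fB : Fintype {k : ℕ // n.testBit k} := Fintype.subtype S hmem
  have hcardS : S.card = n.bitIndices.length :=
    List.toFinset_card_of_nodup Nat.bitIndices_sorted.nodup
  have hsumS : ∑ i ∈ S, 2 ^ i = n := by
    rw [hS, List.sum_toFinset _ Nat.bitIndices_sorted.nodup]
    exact Nat.twoPowSum_bitIndices n
  have hsum1 : (∑ i ∈ S, (2 ^ i - 1)) + S.card = n := by
    rw [Finset.card_eq_sum_ones, ← Finset.sum_add_distrib,
      Finset.sum_congr rfl (fun i _ => Nat.sub_add_cancel (Nat.one_le_two_pow))]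
    exact hsumS
  have hfacn : (Nat.factorial n).factorization 2 = ∑ i ∈ S, (2 ^ i - 1) := by
    rw [factorization_factorial_two, digits_sum_eq_length, ← hcardS]
    omega
  have hfack : ∀ k : ℕ, (Nat.factorial (2 ^ k)).factorization 2 = 2 ^ k - 1 := fun k => by
    rw [factorization_factorial_two, digits_sum_eq_length, Nat.bitIndices_two_pow]
    rfl
  have hcardH : ∀ k : ℕ, Nat.card (H k) = 2 ^ (2 ^ k - 1) := fun k => by
    rw [Sylow.card_eq_multiplicity, Nat.card_eq_fintype_card, Fintype.card_perm,
      Fintype.card_fin, hfack]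
  have hcardPi : Nat.card (∀ k : {k : ℕ // n.testBit k}, H k.1) =
      2 ^ ((Nat.factorial n).factorization 2) := by
    rw [Nat.card_pi, Finset.prod_congr rfl (fun k _ => hcardH k.1),
      Finset.prod_pow_eq_pow_sum]
    congr 1
    rw [hfacn, Finset.sum_subtype S hmem (fun i => 2 ^ i - 1)]
  -- the embedding of the product into `Perm (Fin n)`
  have hcardsig : Fintype.card (Σ k : {k : ℕ // n.testBit k}, Fin (2 ^ k.1)) =
      Fintype.card (Fin n) := by
    rw [Fintype.card_sigma, Fintype.card_fin]
    simp only [Fintype.card_fin]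
    exact (Finset.sum_subtype S hmem (fun i => 2 ^ i)).symm.trans hsumS
  let e : (Σ k : {k : ℕ // n.testBit k}, Fin (2 ^ k.1)) ≃ Fin n :=
    Fintype.equivOfCardEq hcardsig
  let Φ : (∀ k : {k : ℕ // n.testBit k}, Perm (Fin (2 ^ k.1))) →* Perm (Fin n) :=
    (permCongrMulEquiv e).toMonoidHom.comp
      (Perm.sigmaCongrRightHom (fun k : {k : ℕ // n.testBit k} => Fin (2 ^ k.1)))
  have hΦ : Function.Injective Φ :=
    (permCongrMulEquiv e).injective.comp Perm.sigmaCongrRightHom_injective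
  let ι : (∀ k : {k : ℕ // n.testBit k}, H k.1) →*
      (∀ k : {k : ℕ // n.testBit k}, Perm (Fin (2 ^ k.1))) :=
    { toFun := fun x k => (x k : Perm (Fin (2 ^ k.1)))
      map_one' := rfl
      map_mul' := fun _ _ => rfl }
  have hι : Function.Injective ι := fun x y hxy =>
    funext fun k => Subtype.ext (congrFun hxy k)
  let ψ := Φ.comp ι
  have hψ : Function.Injective ψ := hΦ.comp hι
  set R : Subgroup (Perm (Fin n)) := ψ.range with hR
  let iso1 : (∀ k : {k : ℕ // n.testBit k}, H k.1) ≃* R := MonoidHom.ofInjective hψ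
  have hcardR : Nat.card R = 2 ^ ((Nat.factorial n).factorization 2) :=
    (Nat.card_congr iso1.toEquiv).symm.trans hcardPi
  have hRp : IsPGroup 2 R := IsPGroup.iff_card.mpr ⟨_, hcardR⟩
  obtain ⟨Q, hRQ⟩ := hRp.exists_le_sylow
  have hcardQ : Nat.card Q = 2 ^ ((Nat.factorial n).factorization 2) := by
    rw [Q.card_eq_multiplicity, Nat.card_eq_fintype_card, Fintype.card_perm, Fintype.card_fin]
  have hEq : R = (Q : Subgroup (Perm (Fin n))) :=
    Subgroup.eq_of_le_of_card_ge hRQ (hcardQ.trans hcardR.symm).le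
  exact ⟨(Sylow.equiv P Q).trans ((MulEquiv.subgroupCongr hEq.symm).trans iso1.symm)⟩
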